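/- Let L1, M1, L2, M2 be Lagrangians in (ℝ^{2n}, ω) such that the triples (L1,M1,L2) and (L1,M2,L2) are each pairwise transverse. If the Maslov form [L1,M1,L2] is positive definite, then the cross ratio [L1,M1,L2,M2] : L1 → L1 is diagonalizable over ℝ. If moreover the Maslov form [L2,M2,L1] is also positive definite, then all eigenvalues of [L1,M1,L2,M2] are positive real numbers. -/

import Mathlib

open Matrix

noncomputable section

/-- The symplectic vector space `ℝ^{2n}`, with coordinates indexed by `Fin n ⊕ Fin n`. -/
abbrev V2 (n : ℕ) : Type := (Fin n ⊕ Fin n) → ℝ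

/-- The standard matrix `J = [[0, Id],[−Id, 0]]`. -/
def Jn (n : ℕ) : Matrix (Fin n ⊕ Fin n) (Fin n ⊕ Fin n) ℝ :=
  Matrix.fromBlocks 0 1 (-1) 0

/-- The standard symplectic form `ω(x,y) = ᵀx J y` on `ℝ^{2n}`. -/
def omegaForm (n : ℕ) (x y : V2 n) : ℝ := x ⬝ᵥ (Jn n).mulVec y

/-- A subspace is Lagrangian if it has dimension `n` and `ω` vanishes on it. -/
def IsLagrangian (n : ℕ) (L : Submodule ℝ (V2 n)) : Prop :=
  Module.finrank ℝ L = n ∧ ∀ x ∈ L, ∀ y ∈ L, omegaForm n x y = 0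

/-- Membership in `Sp(2n,ℝ)`: `ᵀg J g = J`. -/
def IsSymplectic (n : ℕ) (g : Matrix (Fin n ⊕ Fin n) (Fin n ⊕ Fin n) ℝ) : Prop :=
  gᵀ * Jn n * g = Jn n

/-- `φ : L → L'` is the map whose graph is `M`, i.e. `M = {e + φ e : e ∈ L}`. -/
def IsGraphMap (n : ℕ) (L M L' : Submodule ℝ (V2 n)) (φ : L →ₗ[ℝ] L') : Prop :=
  ∀ x : V2 n, x ∈ M ↔ ∃ e : L, x = (e : V2 n) + (φ e : V2 n)

lemma omega_add_left (n : ℕ) (x x' y : V2 n) :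
    omegaForm n (x + x') y = omegaForm n x y + omegaForm n x' y := by
  simp [omegaForm, add_dotProduct]

lemma omega_add_right (n : ℕ) (x y y' : V2 n) :
    omegaForm n x (y + y') = omegaForm n x y + omegaForm n x y' := by
  simp [omegaForm, Matrix.mulVec_add, dotProduct_add]

lemma omega_smul_left (n : ℕ) (r : ℝ) (x y : V2 n) :
    omegaForm n (r • x) y = r * omegaForm n x y := by
  simp [omegaForm, smul_dotProduct]

lemma omega_smul_right (n : ℕ) (r : ℝ) (x y : V2 n) :
    omegaForm n x (r • y) = r * omegaForm n x y := by
  simp [omegaForm, Matrix.mulVec_smul, dotProduct_smul]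

lemma omega_zero_right (n : ℕ) (x : V2 n) : omegaForm n x 0 = 0 := by
  simp [omegaForm]

lemma Jn_transpose (n : ℕ) : (Jn n)ᵀ = -(Jn n) := by
  simp [Jn, Matrix.fromBlocks_transpose, Matrix.fromBlocks_neg]

lemma omega_antisymm (n : ℕ) (x y : V2 n) : omegaForm n x y = -omegaForm n y x := by
  rw [omegaForm, dotProduct_mulVec, ← Matrix.mulVec_transpose, Jn_transpose]
  simp [omegaForm, Matrix.neg_mulVec, dotProduct_comm]

lemma omega_neg_left (n : ℕ) (x y : V2 n) : omegaForm n (-x) y = -omegaForm n x y := by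
  have := omega_smul_left n (-1) x y; simpa using this

open Module in
theorem aux_diag {E : Type} [AddCommGroup E] [Module ℝ E] [FiniteDimensional ℝ E]
    (B : E →ₗ[ℝ] E →ₗ[ℝ] ℝ) (hsymm : ∀ v w, B v w = B w v)
    (hpos : ∀ v : E, v ≠ 0 → 0 < B v v)
    (T : Module.End ℝ E) (hT : ∀ v w, B (T v) w = B v (T w)) :
    ∃ (b : Basis (Fin (finrank ℝ E)) ℝ E) (μ : Fin (finrank ℝ E) → ℝ),
      ∀ i, T (b i) = μ i • b i := by
  letI core : InnerProductSpace.Core ℝ E :=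
  { inner := fun v w => B v w
    conj_inner_symm := fun v w => by simpa using hsymm w v
    re_inner_nonneg := fun v => by
      rcases eq_or_ne v 0 with h | h
      · simp [h]
      · exact le_of_lt (by simpa using hpos v h)
    definite := fun v hv => by
      by_contra h
      exact (hpos v h).ne' (by simpa using hv)
    add_left := fun x y z => by simp
    smul_left := fun x y r => by simp }
  letI : NormedAddCommGroup E := core.toNormedAddCommGroup
  letI : InnerProductSpace ℝ E := InnerProductSpace.ofCore core.toCore
  have hsym : T.IsSymmetric := fun v w => hT v w
  refine ⟨(hsym.eigenvectorBasis rfl).toBasis, hsym.eigenvalues rfl, fun i => ?_⟩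
  simpa using hsym.apply_eigenvectorBasis rfl i


/-- If the Maslov form `[L1,M1,L2]` is positive definite then the cross ratio
`[L1,M1,L2,M2] = −(M2)_{L2→L1} ∘ (M1)_{L1→L2}` is diagonalizable over `ℝ`; if moreover
`[L2,M2,L1]` is positive definite then all its eigenvalues are positive. -/
theorem cross_ratio_diagonalizable (n : ℕ) (L1 M1 L2 M2 : Submodule ℝ (V2 n))
    (hL1 : IsLagrangian n L1) (hM1 : IsLagrangian n M1)
    (hL2 : IsLagrangian n L2) (hM2 : IsLagrangian n M2)
    (h1M1 : L1 ⊓ M1 = ⊥) (hM1L2 : M1 ⊓ L2 = ⊥) (h12 : L1 ⊓ L2 = ⊥)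
    (h1M2 : L1 ⊓ M2 = ⊥) (hM2L2 : M2 ⊓ L2 = ⊥)
    (φ1 : L1 →ₗ[ℝ] L2) (hφ1 : IsGraphMap n L1 M1 L2 φ1)
    (φ2 : L2 →ₗ[ℝ] L1) (hφ2 : IsGraphMap n L2 M2 L1 φ2)
    (hpos1 : ∀ v : ↥L1, v ≠ 0 → 0 < omegaForm n (v : V2 n) (φ1 v : V2 n)) :
    (∃ (b : Module.Basis (Fin (Module.finrank ℝ ↥L1)) ℝ ↥L1) (μ : Fin (Module.finrank ℝ ↥L1) → ℝ),
      ∀ i, (-(φ2 ∘ₗ φ1)) (b i) = μ i • b i) ∧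
    ((∀ w : ↥L2, w ≠ 0 → 0 < omegaForm n (w : V2 n) (φ2 w : V2 n)) →
      ∀ μ : ℝ, Module.End.HasEigenvalue (-(φ2 ∘ₗ φ1) : Module.End ℝ ↥L1) μ → 0 < μ) := by
  -- symmetry of the Maslov form on L1
  have hBsymm : ∀ v w : ↥L1,
      omegaForm n (v : V2 n) (φ1 w : V2 n) = omegaForm n (w : V2 n) (φ1 v : V2 n) := by
    intro v w
    have hv : ((v : V2 n) + (φ1 v : V2 n)) ∈ M1 := (hφ1 _).2 ⟨v, rfl⟩
    have hw : ((w : V2 n) + (φ1 w : V2 n)) ∈ M1 := (hφ1 _).2 ⟨w, rfl⟩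
    have h0 := hM1.2 _ hv _ hw
    rw [omega_add_left, omega_add_right, omega_add_right,
        hL1.2 _ v.2 _ w.2, hL2.2 _ (φ1 v).2 _ (φ1 w).2] at h0
    have := omega_antisymm n (φ1 v : V2 n) (w : V2 n)
    linarith
  have hCsymm : ∀ v w : ↥L2,
      omegaForm n (v : V2 n) (φ2 w : V2 n) = omegaForm n (w : V2 n) (φ2 v : V2 n) := by
    intro v w
    have hv : ((v : V2 n) + (φ2 v : V2 n)) ∈ M2 := (hφ2 _).2 ⟨v, rfl⟩
    have hw : ((w : V2 n) + (φ2 w : V2 n)) ∈ M2 := (hφ2 _).2 ⟨w, rfl⟩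
    have h0 := hM2.2 _ hv _ hw
    rw [omega_add_left, omega_add_right, omega_add_right,
        hL2.2 _ v.2 _ w.2, hL1.2 _ (φ2 v).2 _ (φ2 w).2] at h0
    have := omega_antisymm n (φ2 v : V2 n) (w : V2 n)
    linarith
  -- the Maslov bilinear form B on L1
  set B : ↥L1 →ₗ[ℝ] ↥L1 →ₗ[ℝ] ℝ := LinearMap.mk₂ ℝ
      (fun v w => omegaForm n (v : V2 n) (φ1 w : V2 n))
      (fun v v' w => by push_cast; rw [omega_add_left])
      (fun r v w => by push_cast; rw [omega_smul_left, smul_eq_mul])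
      (fun v w w' => by
        beta_reduce
        rw [show φ1 (w + w') = φ1 w + φ1 w' from map_add φ1 w w']
        push_cast; rw [omega_add_right])
      (fun r v w => by
        beta_reduce
        rw [show φ1 (r • w) = r • φ1 w from map_smul φ1 r w]
        push_cast; rw [omega_smul_right, smul_eq_mul])
    with hBdef
  set T : Module.End ℝ ↥L1 := -(φ2 ∘ₗ φ1) with hTdef
  -- key identity
  have hkey : ∀ v w : ↥L1, B (T v) w = omegaForm n (φ1 w : V2 n) (φ2 (φ1 v) : V2 n) := by
    intro v w
    have h1 : B (T v) w = omegaForm n (-(φ2 (φ1 v) : V2 n)) (φ1 w : V2 n) := by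
      simp [hBdef, hTdef, omega_neg_left]
    rw [h1, omega_neg_left, omega_antisymm n (φ2 (φ1 v) : V2 n) (φ1 w : V2 n)]
    ring
  have hT : ∀ v w : ↥L1, B (T v) w = B v (T w) := by
    intro v w
    rw [hkey v w, hCsymm (φ1 w) (φ1 v)]
    have : B v (T w) = B (T w) v := hBsymm v (T w)
    rw [this, hkey w v]
  have hBpos : ∀ v : ↥L1, v ≠ 0 → 0 < B v v := fun v hv => hpos1 v hv
  constructor
  · obtain ⟨b, μ, hb⟩ := aux_diag B hBsymm hBpos T hT
    exact ⟨b, μ, hb⟩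
  · intro hpos2 μ hμ
    obtain ⟨v, hv⟩ := hμ.exists_hasEigenvector
    have hvne : v ≠ 0 := hv.2
    have hTv : T v = μ • v := hv.apply_eq_smul
    have hBvv : 0 < B v v := hBpos v hvne
    have hφ1v : φ1 v ≠ 0 := by
      intro h
      have h1 := hpos1 v hvne
      rw [h] at h1
      simp [omega_zero_right] at h1
    have h2 : 0 < omegaForm n (φ1 v : V2 n) (φ2 (φ1 v) : V2 n) := hpos2 _ hφ1v
    have h3 : B (T v) v = μ * B v v := by rw [hTv]; simp
    rw [hkey v v] at h3
    have hBvv' : (0:ℝ) < B v v := hBvv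
    nlinarith
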